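/- There exist a partition of ℕ into two-element sets P₀, P₁, P₂, … such that for each x the two numbers in P_x differ by exactly x+1, and no total recursive function g satisfies g(x) ∈ P_x for all x ∈ ℕ. -/

import Mathlib

namespace Stmt6Aux

open List

/-- covered numbers of a partial pairing -/
def cov (l : List (ℕ × ℕ)) : List ℕ := l.flatMap fun p => [p.2, p.2 + p.1 + 1]

/-- used indices -/
def idx (l : List (ℕ × ℕ)) : List ℕ := l.map Prod.fst

lemma exists_not_mem (s : List ℕ) : ∃ n, n ∉ s := by
  obtain ⟨n, hn⟩ := Infinite.exists_notMem_finset s.toFinset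
  exact ⟨n, by simpa using hn⟩

/-- least natural not in the list -/
noncomputable def fresh (s : List ℕ) : ℕ := Nat.find (exists_not_mem s)

lemma fresh_not_mem (s : List ℕ) : fresh s ∉ s := Nat.find_spec (exists_not_mem s)

lemma mem_of_lt_fresh {s : List ℕ} {n : ℕ} (h : n < fresh s) : n ∈ s := by
  have := Nat.find_min (exists_not_mem s) h
  simpa using this

/-- strict upper bound on a list -/
def ub (s : List ℕ) : ℕ := s.foldr max 0 + 1

lemma lt_ub {s : List ℕ} {n : ℕ} (h : n ∈ s) : n < ub s := by
  induction s with
  | nil => simp at h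
  | cons a t ih =>
    rcases List.mem_cons.mp h with h | h
    · subst h; simp [ub]
    · have := ih h; simp [ub] at this ⊢; omega

lemma not_mem_of_ub_le {s : List ℕ} {n : ℕ} (h : ub s ≤ n) : n ∉ s :=
  fun hm => absurd (lt_ub hm) (not_lt.mpr h)

/-- a bound fresh for both indices and covered values -/
def bnd (l : List (ℕ × ℕ)) : ℕ := ub (idx l ++ cov l)

lemma bnd_not_idx {l : List (ℕ × ℕ)} {n : ℕ} (h : bnd l ≤ n) : n ∉ idx l := by
  intro hm
  exact not_mem_of_ub_le h (List.mem_append_left _ hm)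

lemma bnd_not_cov {l : List (ℕ × ℕ)} {n : ℕ} (h : bnd l ≤ n) : n ∉ cov l := by
  intro hm
  exact not_mem_of_ub_le h (List.mem_append_right _ hm)

/-- the invariant -/
def Inv (l : List (ℕ × ℕ)) : Prop :=
  (idx l).Nodup ∧ ∀ p ∈ l, ∀ q ∈ l, p.1 ≠ q.1 →
    Disjoint ({p.2, p.2 + p.1 + 1} : Finset ℕ) {q.2, q.2 + q.1 + 1}

lemma cov_append (l : List (ℕ × ℕ)) (p : ℕ × ℕ) :
    cov (l ++ [p]) = cov l ++ [p.2, p.2 + p.1 + 1] := by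
  simp [cov]

lemma idx_append (l : List (ℕ × ℕ)) (p : ℕ × ℕ) :
    idx (l ++ [p]) = idx l ++ [p.1] := by
  simp [idx]

lemma mem_cov_of_mem {l : List (ℕ × ℕ)} {x a : ℕ} (h : (x, a) ∈ l) :
    a ∈ cov l ∧ a + x + 1 ∈ cov l := by
  constructor <;> · simp [cov, List.mem_flatMap]; exact ⟨x, a, h, by simp⟩

lemma inv_append {l : List (ℕ × ℕ)} {a b : ℕ} (h : Inv l)
    (ha : a ∉ idx l) (hb : b ∉ cov l) (hb2 : b + a + 1 ∉ cov l) :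
    Inv (l ++ [(a, b)]) := by
  obtain ⟨h1, h2⟩ := h
  constructor
  · rw [idx_append]
    simp [List.nodup_append, h1, ha]
    exact fun x hx h => ha (h ▸ hx)
  · intro p hp q hq hpq
    rcases List.mem_append.mp hp with hp | hp <;>
      rcases List.mem_append.mp hq with hq | hq
    · exact h2 p hp q hq hpq
    · simp at hq; subst hq
      have hc := mem_cov_of_mem hp
      refine Finset.disjoint_left.mpr ?_
      intro t ht ht'
      simp at ht ht'
      rcases ht with ht | ht <;> rcases ht' with ht' | ht' <;> subst ht <;>
        first
        | exact hb (ht' ▸ hc.1)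
        | exact hb (ht' ▸ hc.2)
        | exact hb2 (ht' ▸ hc.1)
        | exact hb2 (ht' ▸ hc.2)
    · simp at hp; subst hp
      have hc := mem_cov_of_mem hq
      refine Finset.disjoint_left.mpr ?_
      intro t ht ht'
      simp at ht ht'
      rcases ht with ht | ht <;> rcases ht' with ht' | ht' <;> subst ht' <;>
        first
        | exact hb (ht ▸ hc.1)
        | exact hb (ht ▸ hc.2)
        | exact hb2 (ht ▸ hc.1)
        | exact hb2 (ht ▸ hc.2)
    · simp at hp hq; subst hp; subst hq; simp at hpq

/-- one stage of the construction, guided by the enumeration `G` -/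
noncomputable def step (G : ℕ → ℕ → ℕ) (e : ℕ) (l : List (ℕ × ℕ)) : List (ℕ × ℕ) :=
  let l1 := l ++ [(bnd l, fresh (cov l))]
  let l2 := l1 ++ [(fresh (idx l1), bnd l1)]
  l2 ++ [(bnd l2, bnd l2 + G e (bnd l2) + 1)]

noncomputable def L (G : ℕ → ℕ → ℕ) : ℕ → List (ℕ × ℕ)
  | 0 => []
  | e + 1 => step G e (L G e)

lemma L_prefix_succ (G : ℕ → ℕ → ℕ) (e : ℕ) : L G e <+: L G (e + 1) := by
  show L G e <+: step G e (L G e)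
  unfold step
  exact ((List.prefix_append _ _).trans (List.prefix_append _ _)).trans
    (List.prefix_append _ _)

lemma L_mono (G : ℕ → ℕ → ℕ) {e e' : ℕ} (h : e ≤ e') : L G e <+: L G e' := by
  induction e' with
  | zero => have : e = 0 := Nat.le_zero.mp h; subst this; exact List.prefix_rfl
  | succ n ih =>
    rcases Nat.lt_or_ge e (n + 1) with h' | h'
    · exact (ih (Nat.lt_succ_iff.mp h')).trans (L_prefix_succ G n)
    · have : e = n + 1 := le_antisymm h h'
      subst this; exact List.prefix_rfl

lemma mem_L_mono (G : ℕ → ℕ → ℕ) {e e' : ℕ} (h : e ≤ e') {p : ℕ × ℕ}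
    (hp : p ∈ L G e) : p ∈ L G e' := (L_mono G h).subset hp

lemma inv_L (G : ℕ → ℕ → ℕ) (e : ℕ) : Inv (L G e) := by
  induction e with
  | zero => exact ⟨List.nodup_nil, by simp [L]⟩
  | succ n ih =>
    show Inv (step G n (L G n))
    unfold step
    have h1 : Inv (L G n ++ [(bnd (L G n), fresh (cov (L G n)))]) :=
      inv_append ih (bnd_not_idx le_rfl) (fresh_not_mem _)
        (bnd_not_cov (by omega))
    set l1 := L G n ++ [(bnd (L G n), fresh (cov (L G n)))] with hl1
    have h2 : Inv (l1 ++ [(fresh (idx l1), bnd l1)]) :=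
      inv_append h1 (fresh_not_mem _) (bnd_not_cov le_rfl)
        (bnd_not_cov (by omega))
    set l2 := l1 ++ [(fresh (idx l1), bnd l1)] with hl2
    exact inv_append h2 (bnd_not_idx le_rfl) (bnd_not_cov (by omega))
      (bnd_not_cov (by omega))

/-- every number gets covered -/
lemma cov_L (G : ℕ → ℕ → ℕ) : ∀ e n, n < e → n ∈ cov (L G e) := by
  intro e
  induction e with
  | zero => intro n hn; omega
  | succ k ih =>
    intro n hn
    have hsub : cov (L G k) ⊆ cov (L G (k + 1)) := by
      intro t ht
      have := L_prefix_succ G k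
      simp only [cov, List.mem_flatMap] at ht ⊢
      obtain ⟨p, hp, h⟩ := ht
      exact ⟨p, this.subset hp, h⟩
    rcases Nat.lt_or_ge n k with h | h
    · exact hsub (ih n h)
    · have hnk : n = k := by omega
      subst hnk
      by_cases hc : n ∈ cov (L G n)
      · exact hsub hc
      · -- fresh (cov (L G n)) = n, and it is covered by the first new pair
        have hfn : fresh (cov (L G n)) = n := by
          have h1 : fresh (cov (L G n)) ≤ n := by
            by_contra h'
            exact hc (mem_of_lt_fresh (by omega))
          have h2 : ¬ fresh (cov (L G n)) < n := by
            intro h'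
            exact fresh_not_mem (cov (L G n)) (ih _ h')
          omega
        show n ∈ cov (step G n (L G n))
        unfold step
        rw [cov_append, cov_append, cov_append]
        simp only [List.mem_append]
        left; left; right
        rw [hfn]; simp

/-- every index gets used -/
lemma idx_L (G : ℕ → ℕ → ℕ) : ∀ e n, n < e → n ∈ idx (L G e) := by
  intro e
  induction e with
  | zero => intro n hn; omega
  | succ k ih =>
    intro n hn
    show n ∈ idx (step G k (L G k))
    unfold step
    set l1 := L G k ++ [(bnd (L G k), fresh (cov (L G k)))] with hl1
    have hsub : idx (L G k) ⊆ idx l1 := by rw [hl1, idx_append]; intro t ht; simp [ht]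
    rw [idx_append, idx_append]
    simp only [List.mem_append]
    rcases Nat.lt_or_ge n k with h | h
    · left; left; exact hsub (ih n h)
    · have hnk : n = k := by omega
      subst hnk
      by_cases hc : n ∈ idx l1
      · left; left; exact hc
      · have hfn : fresh (idx l1) = n := by
          have h1 : fresh (idx l1) ≤ n := by
            by_contra h'
            exact hc (mem_of_lt_fresh (by omega))
          have h2 : ¬ fresh (idx l1) < n := by
            intro h'
            exact fresh_not_mem (idx l1) (hsub (ih _ h'))
          omega
        left; right; simp [hfn]

/-- diagonalisation: at stage `e+1` some pair defeats `G e` -/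
lemma diag_L (G : ℕ → ℕ → ℕ) (e : ℕ) :
    ∃ x a, (x, a) ∈ L G (e + 1) ∧ G e x < a := by
  show ∃ x a, (x, a) ∈ step G e (L G e) ∧ G e x < a
  unfold step
  set l1 := L G e ++ [(bnd (L G e), fresh (cov (L G e)))]
  set l2 := l1 ++ [(fresh (idx l1), bnd l1)]
  exact ⟨bnd l2, bnd l2 + G e (bnd l2) + 1, List.mem_append_right _ (List.mem_singleton_self _), by omega⟩

/-- keys are unique -/
lemma key_unique {l : List (ℕ × ℕ)} (h : (idx l).Nodup) {x a b : ℕ}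
    (ha : (x, a) ∈ l) (hb : (x, b) ∈ l) : a = b := by
  induction l with
  | nil => simp at ha
  | cons p t ih =>
    rw [idx] at h
    simp only [List.map_cons, List.nodup_cons] at h
    rcases List.mem_cons.mp ha with ha' | ha' <;> rcases List.mem_cons.mp hb with hb' | hb'
    · exact (Prod.ext_iff.mp (ha'.trans hb'.symm)).2
    · exfalso; apply h.1; rw [← ha']; simp
      exact ⟨b, by simpa using hb'⟩
    · exfalso; apply h.1; rw [← hb']; simp
      exact ⟨a, by simpa using ha'⟩
    · exact ih h.2 ha' hb'

lemma mem_unique (G : ℕ → ℕ → ℕ) {e e' x a b : ℕ}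
    (ha : (x, a) ∈ L G e) (hb : (x, b) ∈ L G e') : a = b := by
  have ha' := mem_L_mono G (le_max_left e e') ha
  have hb' := mem_L_mono G (le_max_right e e') hb
  exact key_unique (inv_L G (max e e')).1 ha' hb'

lemma exists_pair (G : ℕ → ℕ → ℕ) (x : ℕ) : ∃ a, (x, a) ∈ L G (x + 1) := by
  have := idx_L G (x + 1) x (by omega)
  simp only [idx, List.mem_map] at this
  obtain ⟨p, hp, hpe⟩ := this
  subst hpe
  exact ⟨p.2, by rwa [Prod.mk.eta]⟩

/-- the chosen first element of `P x` -/
noncomputable def A (G : ℕ → ℕ → ℕ) (x : ℕ) : ℕ := Classical.choose (exists_pair G x)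

lemma A_mem (G : ℕ → ℕ → ℕ) (x : ℕ) : (x, A G x) ∈ L G (x + 1) :=
  Classical.choose_spec (exists_pair G x)

noncomputable def P (G : ℕ → ℕ → ℕ) (x : ℕ) : Finset ℕ := {A G x, A G x + x + 1}

end Stmt6Aux

open Stmt6Aux in
theorem stmt6 : ∃ P : ℕ → Finset ℕ,
    (∀ x y : ℕ, x ≠ y → Disjoint (P x) (P y)) ∧
    (∀ n : ℕ, ∃ x : ℕ, n ∈ P x) ∧
    (∀ x : ℕ, ∃ a : ℕ, P x = {a, a + (x + 1)}) ∧
    ¬ ∃ g : ℕ → ℕ, Computable g ∧ ∀ x : ℕ, g x ∈ P x := by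
  -- fix an enumeration of all computable functions
  have hcount : Countable {f : ℕ → ℕ // Computable f} := by
    have hinj : Function.Injective (fun f : {f : ℕ → ℕ // Computable f} =>
        Classical.choose (Nat.Partrec.Code.exists_code.mp f.2)) := by
      intro f g h
      have hf := Classical.choose_spec (Nat.Partrec.Code.exists_code.mp f.2)
      have hg := Classical.choose_spec (Nat.Partrec.Code.exists_code.mp g.2)
      simp only [h] at hf
      apply Subtype.ext; funext n
      have := congrFun (hf.symm.trans hg) n
      simpa [Part.some_inj] using this
    exact hinj.countable
  have hne : Nonempty {f : ℕ → ℕ // Computable f} := ⟨⟨id, Computable.id⟩⟩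
  obtain ⟨S, hS⟩ := exists_surjective_nat {f : ℕ → ℕ // Computable f}
  set G : ℕ → ℕ → ℕ := fun e => (S e).1 with hG
  refine ⟨P G, ?_, ?_, ?_, ?_⟩
  · -- disjointness
    intro x y hxy
    have hx := mem_L_mono G (le_max_left (x+1) (y+1)) (A_mem G x)
    have hy := mem_L_mono G (le_max_right (x+1) (y+1)) (A_mem G y)
    have := (inv_L G (max (x+1) (y+1))).2 _ hx _ hy hxy
    simpa [P] using this
  · -- covering
    intro n
    have := cov_L G (n + 1) n (by omega)
    simp only [cov, List.mem_flatMap] at this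
    obtain ⟨p, hp, hn⟩ := this
    refine ⟨p.1, ?_⟩
    have hpa : (p.1, p.2) ∈ L G (n + 1) := by rwa [Prod.mk.eta]
    have : p.2 = A G p.1 := mem_unique G hpa (A_mem G p.1)
    simp only [List.mem_cons, List.not_mem_nil, or_false] at hn
    rcases hn with hn | hn <;> rw [hn, this] <;> simp [P]
  · -- shape
    intro x
    refine ⟨A G x, ?_⟩
    simp only [P]
    rw [show A G x + x + 1 = A G x + (x + 1) from by omega]
  · -- no computable choice function
    rintro ⟨g, hg, hsel⟩
    obtain ⟨e, he⟩ := hS ⟨g, hg⟩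
    obtain ⟨x, a, hmem, hlt⟩ := diag_L G e
    have hGe : G e = g := by show ((S e : {f : ℕ → ℕ // Computable f}) : ℕ → ℕ) = g; rw [he]
    have ha : a = A G x := mem_unique G hmem (A_mem G x)
    have := hsel x
    rw [← hGe] at this
    simp only [P, Finset.mem_insert, Finset.mem_singleton] at this
    rcases this with h | h <;> omega
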